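/- Let 2 < k < j be integers and let K_N, with N ≥ 4j+1, have a red-blue edge coloring with no red copy of C_{2k+1} and no blue copy of W_{2j}. Let w be a vertex of K_N and let H be the set of blue neighbors of w, with |H| ≥ 3j. Then the red graph H^R induced on H is not bipartite. -/

import Mathlib

/-- `G` contains a cycle of length `n` (a copy of `C_n`). -/
def HasNCycle {V : Type*} (G : SimpleGraph V) (n : ℕ) : Prop :=
  ∃ (v : V) (c : G.Walk v v), c.IsCycle ∧ c.length = n

/-- `G` contains a copy of the wheel `W_n = C_n ∗ K_1`: a cycle of length `n`
together with a hub adjacent to all of its vertices. -/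
def HasNWheel {V : Type*} (G : SimpleGraph V) (n : ℕ) : Prop :=
  ∃ (w v : V) (c : G.Walk v v), c.IsCycle ∧ c.length = n ∧ ∀ x ∈ c.support, G.Adj w x

/-- `G` is bipartite: the vertices split into two parts with all edges across. -/
def IsBipartite {V : Type*} (G : SimpleGraph V) : Prop :=
  ∃ A : Set V, ∀ u v, G.Adj u v → (u ∈ A ↔ v ∉ A)

open List

variable {V : Type*}

namespace Aux


/-! ### List helpers -/

lemma getLast?_eq_some {l : List V} (d : V) (h : l ≠ []) :
    l.getLast? = some (l.getLastD d) := by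
  rw [getLastD_eq_getLast?, getLast?_eq_getLast h]; rfl

lemma getLastD_mem {l : List V} (d : V) (h : l ≠ []) : l.getLastD d ∈ l := by
  rw [getLastD_eq_getLast?, getLast?_eq_getLast h]; exact getLast_mem h

lemma headD_mem {l : List V} (d : V) (h : l ≠ []) : l.headD d ∈ l := by
  cases l with | nil => simp at h | cons a t => exact mem_cons_self

lemma getLastD_append (l1 l2 : List V) (d : V) (h : l2 ≠ []) :
    (l1 ++ l2).getLastD d = l2.getLastD d := by
  induction l1 with
  | nil => rfl
  | cons a t ih =>
      have hne : t ++ l2 ≠ [] := by simp [h]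
      rw [cons_append, getLastD_cons]
      rw [getLastD_eq_getLast?, getLast?_eq_getLast hne] at ih ⊢
      exact ih

lemma headD_cons (a : V) (t : List V) (d : V) : (a :: t).headD d = a := rfl

lemma getLastD_ne_headD {l : List V} (d : V) (hnd : l.Nodup) (h2 : 2 ≤ l.length) :
    l.getLastD d ≠ l.headD d := by
  match l with
  | a :: b :: t =>
    have h1 : (b :: t).getLastD a ∈ b :: t := getLastD_mem a (by simp)
    have : a ∉ b :: t := by simp only [nodup_cons] at hnd; exact hnd.1
    rw [getLastD_cons, headD_cons]
    intro he; rw [he] at h1; exact this h1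

lemma chain'_glue {r : V → V → Prop} {l1 l2 : List V} (h1 : l1 ≠ []) (h2 : l2 ≠ [])
    (c1 : l1.Chain' r) (c2 : l2.Chain' r) (d : V)
    (hj : r (l1.getLastD d) (l2.headD d)) : (l1 ++ l2).Chain' r := by
  show List.IsChain _ _
  rw [List.isChain_append]
  refine ⟨c1, c2, fun x hx y hy => ?_⟩
  rw [getLast?_eq_some d h1] at hx
  rw [List.head?_eq_head h2] at hy
  cases hx; cases hy
  rwa [headD_eq_head?, List.head?_eq_head h2] at hj

lemma pairwise_of_forall_mem {r : V → V → Prop} {S : Set V} {l : List V}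
    (hnd : l.Nodup) (hmem : ∀ x ∈ l, x ∈ S) (hS : S.Pairwise r) : l.Pairwise r := by
  induction l with
  | nil => simp
  | cons a t ih =>
      simp only [nodup_cons] at hnd
      refine List.Pairwise.cons (fun b hb => hS (hmem a (by simp)) (hmem b (by simp [hb]))
        (fun h => hnd.1 (h ▸ hb))) (ih hnd.2 (fun x hx => hmem x (by simp [hx])))

lemma chain'_of_forall_mem {r : V → V → Prop} {S : Set V} {l : List V}
    (hnd : l.Nodup) (hmem : ∀ x ∈ l, x ∈ S) (hS : S.Pairwise r) : l.Chain' r :=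
  List.Pairwise.isChain (pairwise_of_forall_mem hnd hmem hS)

/-! ### picking sublists from sets -/

lemma exists_sublist (S : Set V) (hS : S.Finite) (m : ℕ) (hm : m ≤ S.ncard) :
    ∃ l : List V, l.Nodup ∧ l.length = m ∧ ∀ x ∈ l, x ∈ S := by
  have hm' : m ≤ hS.toFinset.card := by rwa [Set.ncard_eq_toFinset_card S hS] at hm
  obtain ⟨t, hts, htc⟩ := Finset.exists_subset_card_eq hm'
  refine ⟨t.toList, t.nodup_toList, by simp [htc], fun x hx => ?_⟩
  have : x ∈ t := by simpa using hx
  simpa using hts this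




lemma exists_walk_of_chain (G : SimpleGraph V) :
    ∀ (t : List V) (a : V), List.Chain G.Adj a t →
      ∃ p : G.Walk a (t.getLastD a), p.support = a :: t := by
  intro t
  induction t with
  | nil => exact fun a _ => ⟨SimpleGraph.Walk.nil, rfl⟩
  | cons b t ih =>
      intro a h
      have h : G.Adj a b ∧ List.Chain G.Adj b t := List.isChain_cons_cons.1 h
      obtain ⟨p, hp⟩ := ih b h.2
      rw [show (b :: t).getLastD a = t.getLastD b from List.getLastD_cons]
      exact ⟨SimpleGraph.Walk.cons h.1 p, by simp [hp]⟩

lemma closing_edge_not_mem {G : SimpleGraph V} {a b : V} (p : G.Walk a b)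
    (hnd : p.support.Nodup) (h2 : 2 ≤ p.length) : s(b, a) ∉ p.edges := by
  cases p with
  | nil => simp
  | @cons _ c _ hac q =>
      intro hmem
      rw [SimpleGraph.Walk.edges_cons, List.mem_cons] at hmem
      rw [SimpleGraph.Walk.support_cons, List.nodup_cons] at hnd
      rcases hmem with h | h
      · rw [Sym2.eq_iff] at h
        rcases h with ⟨hba, hac'⟩ | ⟨hbc, _⟩
        · -- b = a : closed path a = b, but q nonempty path
          subst hba
          exact hnd.1 (q.end_mem_support)
        · -- b = c
          subst hbc
          cases q with
          | nil => simp [SimpleGraph.Walk.length_cons] at h2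
          | cons h' q' =>
              rw [SimpleGraph.Walk.support_cons, List.nodup_cons] at hnd
              exact hnd.2.1 (q'.end_mem_support)
      · have : a ∈ q.support := SimpleGraph.Walk.snd_mem_support_of_mem_edges q h
        exact hnd.1 this




lemma hasNCycle_cons (G : SimpleGraph V) (a : V) (t : List V) (h2 : 2 ≤ t.length)
    (hnd : (a :: t).Nodup) (hch : List.Chain G.Adj a t) (hcl : G.Adj (t.getLastD a) a) :
    ∃ c : G.Walk a a, c.IsCycle ∧ c.length = t.length + 1 ∧ ∀ x ∈ c.support, x ∈ a :: t := by
  obtain ⟨p, hp⟩ := exists_walk_of_chain G t a hch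
  have hpnd : p.support.Nodup := by rw [hp]; exact hnd
  have hplen : p.length = t.length := by
    have := congrArg List.length hp
    rw [SimpleGraph.Walk.length_support] at this
    simpa using this
  have hnotmem : s(t.getLastD a, a) ∉ p.edges :=
    closing_edge_not_mem p hpnd (by omega)
  refine ⟨p.append (SimpleGraph.Walk.cons hcl SimpleGraph.Walk.nil), ?_, ?_, ?_⟩
  · constructor
    · constructor
      · constructor
        rw [SimpleGraph.Walk.edges_append, SimpleGraph.Walk.edges_cons,
          SimpleGraph.Walk.edges_nil]
        rw [List.nodup_append]
        refine ⟨((SimpleGraph.Walk.isPath_def p).2 hpnd).isTrail.edges_nodup, by simp, ?_⟩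
        intro e he e' he' hee
        simp only [List.mem_singleton] at he'
        subst he'
        subst hee
        exact hnotmem he
      · intro hnil
        have := congrArg SimpleGraph.Walk.length hnil
        rw [SimpleGraph.Walk.length_append] at this
        simp at this
    · rw [SimpleGraph.Walk.support_append, hp]
      simp only [SimpleGraph.Walk.support_cons, SimpleGraph.Walk.support_nil,
        List.tail_cons, List.tail]
      rw [List.nodup_cons] at hnd
      rw [show (a :: t) ++ [a] = a :: (t ++ [a]) from rfl]
      simp only [List.tail_cons]
      rw [List.nodup_append]
      refine ⟨hnd.2, by simp, ?_⟩
      intro x hx y hy hxy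
      rw [List.mem_singleton] at hy
      subst hy
      subst hxy
      exact hnd.1 hx
  · rw [SimpleGraph.Walk.length_append]; simp [hplen]
  · intro x hx
    rw [SimpleGraph.Walk.support_append, hp] at hx
    simp only [SimpleGraph.Walk.support_cons, SimpleGraph.Walk.support_nil,
      List.tail_cons] at hx
    rcases List.mem_append.1 hx with h | h
    · exact h
    · simp only [List.mem_singleton] at h; simp [h]

lemma hasNCycle_of_list (G : SimpleGraph V) (l : List V) (h3 : 3 ≤ l.length)
    (hnd : l.Nodup) (hch : l.Chain' G.Adj) (d : V)
    (hcl : G.Adj (l.getLastD d) (l.headD d)) : HasNCycle G l.length := by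
  match l with
  | a :: t =>
    have hch' : List.Chain G.Adj a t := hch
    have hcl' : G.Adj (t.getLastD a) a := by
      rwa [List.getLastD_cons, headD_cons] at hcl
    obtain ⟨c, hc, hlen, _⟩ := hasNCycle_cons G a t (by simpa using h3) hnd hch' hcl'
    exact ⟨a, c, hc, by simp [hlen]⟩

lemma hasNWheel_of_list (G : SimpleGraph V) (hub : V) (l : List V) (h3 : 3 ≤ l.length)
    (hnd : l.Nodup) (hch : l.Chain' G.Adj) (d : V)
    (hcl : G.Adj (l.getLastD d) (l.headD d))
    (hhub : ∀ x ∈ l, G.Adj hub x) : HasNWheel G l.length := by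
  match l with
  | a :: t =>
    have hch' : List.Chain G.Adj a t := hch
    have hcl' : G.Adj (t.getLastD a) a := by
      rwa [List.getLastD_cons, headD_cons] at hcl
    obtain ⟨c, hc, hlen, hsupp⟩ := hasNCycle_cons G a t (by simpa using h3) hnd hch' hcl'
    exact ⟨hub, a, c, hc, by simp [hlen], fun x hx => hhub x (hsupp x hx)⟩




def ilv : List V → List V → List V
  | cs, [] => cs
  | [], is => is
  | c :: cs, i :: is => c :: i :: ilv cs is

@[simp] lemma ilv_nil_right (cs : List V) : ilv cs [] = cs := by cases cs <;> rfl
@[simp] lemma ilv_nil_left (is : List V) : ilv ([] : List V) is = is := by cases is <;> rfl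
lemma ilv_cons_cons (c i : V) (cs is : List V) :
    ilv (c :: cs) (i :: is) = c :: i :: ilv cs is := rfl

lemma ilv_perm : ∀ (cs is : List V), ilv cs is ~ cs ++ is := by
  intro cs
  induction cs with
  | nil => intro is; cases is <;> simp
  | cons c cs ih =>
      intro is
      cases is with
      | nil => simp
      | cons i is =>
          rw [ilv_cons_cons]
          calc c :: i :: ilv cs is ~ c :: i :: (cs ++ is) := by
                exact List.Perm.cons _ (List.Perm.cons _ (ih is))
            _ ~ (c :: cs) ++ i :: is := by
                rw [cons_append]
                exact List.Perm.cons _ (List.perm_middle.symm)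

lemma ilv_length (cs is : List V) : (ilv cs is).length = cs.length + is.length := by
  simpa using (ilv_perm cs is).length_eq

lemma ilv_mem {cs is : List V} {x : V} : x ∈ ilv cs is ↔ x ∈ cs ∨ x ∈ is := by
  rw [(ilv_perm cs is).mem_iff, List.mem_append]

lemma ilv_nodup {cs is : List V} (h1 : cs.Nodup) (h2 : is.Nodup)
    (h : ∀ x ∈ is, x ∉ cs) : (ilv cs is).Nodup := by
  rw [(ilv_perm cs is).nodup_iff, List.nodup_append]
  exact ⟨h1, h2, fun x hx y hy hxy => h y hy (hxy ▸ hx)⟩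

lemma ilv_headD (c : V) (cs is : List V) (d : V) : (ilv (c :: cs) is).headD d = c := by
  cases is <;> rfl

lemma ilv_head? (c : V) (cs is : List V) : (ilv (c :: cs) is).head? = some c := by
  cases is <;> rfl

lemma ilv_chain' (G : SimpleGraph V) :
    ∀ (cs is : List V), is.length ≤ cs.length → cs.Chain' G.Adj →
      (∀ i ∈ is, ∀ c ∈ cs, G.Adj i c) → (ilv cs is).Chain' G.Adj := by
  intro cs
  induction cs with
  | nil =>
      intro is h _ _
      cases is with
      | nil => exact List.IsChain.nil
      | cons i is => simp at h
  | cons c cs ih =>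
      intro is hlen hch hcr
      cases is with
      | nil => simpa using hch
      | cons i is =>
          rw [ilv_cons_cons]
          show List.IsChain _ _
          rw [List.isChain_cons]
          refine ⟨?_, ?_⟩
          · intro y hy
            simp only [List.head?_cons, Option.mem_def, Option.some.injEq] at hy
            exact hy ▸ (hcr i (by simp) c (by simp)).symm
          · rw [List.isChain_cons]
            refine ⟨?_, ih is (by simpa using hlen) (List.IsChain.tail hch)
              (fun i' hi' c' hc' => hcr i' (by simp [hi']) c' (by simp [hc']))⟩
            intro y hy
            cases cs with
            | nil =>
                have : is = [] := by
                  have h1 : is.length + 1 ≤ 1 := by simpa using hlen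
                  exact List.eq_nil_of_length_eq_zero (by omega)
                subst this
                simp at hy
            | cons c' cs' =>
                rw [ilv_head?, Option.mem_def, Option.some.injEq] at hy
                exact hy ▸ hcr i (by simp) c' (by simp)

lemma getLastD_congr {l : List V} (d d' : V) (h : l ≠ []) : l.getLastD d = l.getLastD d' := by
  rw [List.getLastD_eq_getLast?, List.getLastD_eq_getLast?, List.getLast?_eq_getLast h]
  rfl

lemma ilv_chain_eq (G : SimpleGraph V) :
    ∀ (cs is : List V), cs.length = is.length →
      (∀ i ∈ is, ∀ c ∈ cs, G.Adj i c) → (ilv cs is).Chain' G.Adj := by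
  intro cs
  induction cs with
  | nil =>
      intro is h _
      have : is = [] := List.eq_nil_of_length_eq_zero (by simpa using h.symm)
      subst this; exact List.IsChain.nil
  | cons c cs ih =>
      intro is hlen hcr
      cases is with
      | nil => simp at hlen
      | cons i is =>
          rw [ilv_cons_cons]
          show List.IsChain _ _
          rw [List.isChain_cons]
          refine ⟨fun y hy => ?_, ?_⟩
          · simp only [List.head?_cons, Option.mem_def, Option.some.injEq] at hy
            exact hy ▸ (hcr i (by simp) c (by simp)).symm
          · rw [List.isChain_cons]
            refine ⟨?_, ih is (by simpa using hlen)
              (fun i' hi' c' hc' => hcr i' (by simp [hi']) c' (by simp [hc']))⟩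
            intro y hy
            cases cs with
            | nil =>
                have : is = [] := List.eq_nil_of_length_eq_zero (by simpa using hlen.symm)
                subst this; simp at hy
            | cons c' cs' =>
                rw [ilv_head?, Option.mem_def, Option.some.injEq] at hy
                exact hy ▸ hcr i (by simp) c' (by simp)

lemma ilv_getLastD_eq :
    ∀ (cs is : List V) (d : V), cs.length = is.length →
      (ilv cs is).getLastD d = is.getLastD d := by
  intro cs
  induction cs with
  | nil =>
      intro is d h
      have : is = [] := List.eq_nil_of_length_eq_zero (by simpa using h.symm)
      subst this; rfl
  | cons c cs ih =>
      intro is d hlen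
      cases is with
      | nil => simp at hlen
      | cons i is =>
          rw [ilv_cons_cons, List.getLastD_cons, List.getLastD_cons,
            ih is i (by simpa using hlen), List.getLastD_cons]

lemma ilv_getLastD_lt :
    ∀ (cs is : List V) (d : V), is.length < cs.length →
      (ilv cs is).getLastD d = cs.getLastD d := by
  intro cs
  induction cs with
  | nil => intro is d h; simp at h
  | cons c cs ih =>
      intro is d hlen
      cases is with
      | nil => rfl
      | cons i is =>
          have hlt : is.length < cs.length := by simpa using hlen
          have hne : cs ≠ [] := by
            intro h; rw [h] at hlt; simp at hlt
          rw [ilv_cons_cons, List.getLastD_cons, List.getLastD_cons,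
            ih is i hlt, List.getLastD_cons, getLastD_congr _ _ hne]





lemma wheel_interleave (G : SimpleGraph V) (hub : V) (S : Set V) (hSfin : S.Finite)
    (is : List V) (s : ℕ)
    (hSp : S.Pairwise G.Adj) (hhubS : ∀ x ∈ S, G.Adj hub x)
    (hisS : ∀ i ∈ is, ∀ c ∈ S, G.Adj i c) (hhubis : ∀ i ∈ is, G.Adj hub i)
    (hndis : is.Nodup) (hdisj : ∀ i ∈ is, i ∉ S)
    (hlen : is.length ≤ s) (hcard : s ≤ S.ncard) (h3 : 3 ≤ s + is.length) :
    HasNWheel G (s + is.length) := by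
  obtain ⟨cs, hcnd, hclen, hcmem⟩ := exists_sublist S hSfin s hcard
  set l := ilv cs is with hl
  have hlnd : l.Nodup := ilv_nodup hcnd hndis (fun x hx hx' => hdisj x hx (hcmem x hx'))
  have hllen : l.length = s + is.length := by rw [hl, ilv_length, hclen]
  have hch : l.Chain' G.Adj := ilv_chain' G cs is (by omega)
    (chain'_of_forall_mem hcnd hcmem hSp) (fun i hi c hc => hisS i hi c (hcmem c hc))
  have hlne : l ≠ [] := by intro h; rw [h] at hllen; simp at hllen; omega
  have h2 : 2 ≤ l.length := by omega
  have hcs : cs ≠ [] := by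
    intro h; rw [h] at hclen; simp at hclen; omega
  have hheadcs : l.headD hub ∈ cs := by
    cases cs with
    | nil => exact absurd rfl hcs
    | cons c cs' => rw [hl, ilv_headD]; exact mem_cons_self
  have hclose : G.Adj (l.getLastD hub) (l.headD hub) := by
    have hlast := getLastD_mem hub hlne
    have hne := getLastD_ne_headD hub hlnd h2
    rcases ilv_mem.1 hlast with h | h
    · exact hSp (hcmem _ h) (hcmem _ hheadcs) hne
    · exact hisS _ h _ (hcmem _ hheadcs)
  have := hasNWheel_of_list G hub l (by omega) hlnd hch hub hclose
    (fun x hx => by rcases ilv_mem.1 hx with h | h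
                    exacts [hhubS x (hcmem x h), hhubis x h])
  rwa [hllen] at this


lemma ilv_head?_of_ne {xs : List V} (ys : List V) (h : xs ≠ []) :
    (ilv xs ys).head? = xs.head? := by
  cases xs with
  | nil => exact absurd rfl h
  | cons c cs => rw [ilv_head?, List.head?_cons]

lemma mem_of_mem_head? {l : List V} {x : V} (h : x ∈ l.head?) : x ∈ l := by
  cases l with
  | nil => simp at h
  | cons a t => simp only [List.head?_cons, Option.mem_def, Option.some.injEq] at h; simp [h]

lemma red_claim (G : SimpleGraph V) (P Q : Set V) (hP : P.Finite) (hQ : Q.Finite)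
    (hdisj : ∀ x ∈ P, x ∉ Q)
    (hcross : ∀ x ∈ P, ∀ y ∈ Q, G.Adj x y)
    (u x0 y0 : V) (huP : u ∉ P) (huQ : u ∉ Q) (hx0 : x0 ∈ P) (hy0 : y0 ∈ Q)
    (hux : G.Adj u x0) (huy : G.Adj u y0) (k : ℕ) (hk : 3 ≤ k)
    (hPc : k ≤ P.ncard) (hQc : k ≤ Q.ncard) : HasNCycle G (2 * k + 1) := by
  obtain ⟨xs', hxnd, hxlen, hxmem⟩ := exists_sublist (P \ {x0}) hP.diff (k-1) (by
    have := Set.ncard_diff_singleton_add_one hx0 hP; omega)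
  obtain ⟨ys', hynd, hylen, hymem⟩ := exists_sublist (Q \ {y0}) hQ.diff (k-1) (by
    have := Set.ncard_diff_singleton_add_one hy0 hQ; omega)
  set xs : List V := x0 :: xs' with hxs
  set ys : List V := ys' ++ [y0] with hys
  have hxsP : ∀ x ∈ xs, x ∈ P := by
    intro x hx
    rcases List.mem_cons.1 hx with h | h
    · exact h ▸ hx0
    · exact (hxmem x h).1
  have hysQ : ∀ y ∈ ys, y ∈ Q := by
    intro y hy
    rcases List.mem_append.1 hy with h | h
    · exact (hymem y h).1
    · rw [List.mem_singleton] at h; exact h ▸ hy0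
  have hxslen : xs.length = k := by rw [hxs]; simp [hxlen]; omega
  have hyslen : ys.length = k := by rw [hys]; simp [hylen]; omega
  have hxsnd : xs.Nodup := by
    rw [hxs, List.nodup_cons]
    exact ⟨fun h => (hxmem x0 h).2 rfl, hxnd⟩
  have hysnd : ys.Nodup := by
    rw [hys, List.nodup_append]
    refine ⟨hynd, by simp, ?_⟩
    intro y hy y' hy' hyy
    rw [List.mem_singleton] at hy'
    exact (hymem y hy).2 (hyy.trans hy')
  set l : List V := u :: ilv xs ys with hl
  have hlnd : l.Nodup := by
    rw [hl, List.nodup_cons]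
    constructor
    · intro h
      rcases ilv_mem.1 h with h | h
      · exact huP (hxsP u h)
      · exact huQ (hysQ u h)
    · exact ilv_nodup hxsnd hysnd (fun y hy hy' => hdisj y (hxsP y hy') (hysQ y hy))
  have hllen : l.length = 2 * k + 1 := by
    rw [hl]; simp only [List.length_cons, ilv_length, hxslen, hyslen]; omega
  have hch : l.Chain' G.Adj := by
    rw [hl]
    show List.IsChain _ _
    rw [List.isChain_cons]
    constructor
    · intro y hy
      rw [ilv_head?_of_ne ys (by rw [hxs]; simp)] at hy
      have : y ∈ xs := mem_of_mem_head? hy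
      rw [hxs, List.head?_cons, Option.mem_def, Option.some.injEq] at hy
      exact hy ▸ hux
    · exact ilv_chain_eq G xs ys (by omega)
        (fun i hi c hc => (hcross c (hxsP c hc) i (hysQ i hi)).symm)
  have hclose : G.Adj (l.getLastD u) (l.headD u) := by
    have h1 : l.getLastD u = y0 := by
      rw [hl, List.getLastD_cons, ilv_getLastD_eq xs ys u (by omega), hys,
        List.getLastD_concat]
    rw [h1, hl, headD_cons]
    exact huy.symm
  have := hasNCycle_of_list G l (by omega) hlnd hch u hclose
  rwa [hllen] at this

lemma red_3a (G : SimpleGraph V) (P Q : Set V) (hP : P.Finite) (hQ : Q.Finite)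
    (hdisj : ∀ x ∈ P, x ∉ Q)
    (hcross : ∀ x ∈ P, ∀ y ∈ Q, G.Adj x y)
    (u u' y2 y' : V)
    (huu' : G.Adj u' u) (huy2 : G.Adj u y2) (hu'y' : G.Adj u' y')
    (hy2 : y2 ∈ Q) (hy' : y' ∈ Q) (hyne : y2 ≠ y')
    (huP : u ∉ P) (huQ : u ∉ Q) (hu'P : u' ∉ P) (hu'Q : u' ∉ Q)
    (k : ℕ) (hk : 3 ≤ k) (hPc : k - 1 ≤ P.ncard) (hQc : k ≤ Q.ncard) :
    HasNCycle G (2 * k + 1) := by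
  obtain ⟨xs, hxnd, hxlen, hxmem⟩ := exists_sublist P hP (k-1) hPc
  have hQ2 : k - 2 ≤ (Q \ {y2, y'}).ncard := by
    have hsub : ({y2, y'} : Set V) ⊆ Q := by
      intro z hz; rcases hz with h | h
      · exact h ▸ hy2
      · exact h ▸ hy'
    have := Set.ncard_diff hsub ((Set.finite_singleton _).insert _)
    rw [Set.ncard_pair hyne] at this
    omega
  obtain ⟨ys'', hynd, hylen, hymem⟩ := exists_sublist (Q \ {y2, y'}) hQ.diff (k-2) hQ2
  set ys : List V := ys'' ++ [y'] with hys
  have hysQ : ∀ y ∈ ys, y ∈ Q := by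
    intro y hy
    rcases List.mem_append.1 hy with h | h
    · exact (hymem y h).1
    · rw [List.mem_singleton] at h; exact h ▸ hy'
  have hyslen : ys.length = k - 1 := by rw [hys]; simp [hylen]; omega
  have hysnd : ys.Nodup := by
    rw [hys, List.nodup_append]
    refine ⟨hynd, by simp, ?_⟩
    intro y hy y' hy'2 hyy
    rw [List.mem_singleton] at hy'2
    exact (hymem y hy).2 (by simp [hyy, hy'2])
  have hy2ys : y2 ∉ ys := by
    intro h
    rcases List.mem_append.1 h with h | h
    · exact (hymem y2 h).2 (by simp)
    · rw [List.mem_singleton] at h; exact hyne h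
  have hilvnd : (ilv xs ys).Nodup :=
    ilv_nodup hxnd hysnd (fun y hy hy' => hdisj y (hxmem y hy') (hysQ y hy))
  have hilvmem : ∀ x ∈ ilv xs ys, x ∈ P ∨ x ∈ Q := by
    intro x hx
    rcases ilv_mem.1 hx with h | h
    · exact Or.inl (hxmem x h)
    · exact Or.inr (hysQ x h)
  set l : List V := u' :: u :: y2 :: ilv xs ys with hl
  have hlnd : l.Nodup := by
    rw [hl, List.nodup_cons, List.nodup_cons, List.nodup_cons]
    refine ⟨?_, ?_, ?_, hilvnd⟩
    · intro h
      rcases List.mem_cons.1 h with h | h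
      · exact (G.ne_of_adj huu') h
      · rcases List.mem_cons.1 h with h | h
        · exact hu'Q (h ▸ hy2)
        · rcases hilvmem u' h with h | h
          exacts [hu'P h, hu'Q h]
    · intro h
      rcases List.mem_cons.1 h with h | h
      · exact huQ (h ▸ hy2)
      · rcases hilvmem u h with h | h
        exacts [huP h, huQ h]
    · intro h
      rcases ilv_mem.1 h with h2 | h2
      · exact hdisj y2 (hxmem y2 h2) hy2
      · exact hy2ys h2
  have hllen : l.length = 2 * k + 1 := by
    rw [hl]; simp only [List.length_cons, ilv_length, hxlen, hyslen]; omega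
  have hxsne : xs ≠ [] := by
    intro h; rw [h] at hxlen; simp at hxlen; omega
  have hch : l.Chain' G.Adj := by
    rw [hl]
    show List.IsChain _ _
    rw [List.isChain_cons_cons, List.isChain_cons_cons, List.isChain_cons]
    refine ⟨huu', huy2, ?_, ilv_chain_eq G xs ys (by omega)
      (fun i hi c hc => (hcross c (hxmem c hc) i (hysQ i hi)).symm)⟩
    intro y hy
    rw [ilv_head?_of_ne ys hxsne] at hy
    have : y ∈ xs := mem_of_mem_head? hy
    exact (hcross y (hxmem y this) y2 hy2).symm
  have hclose : G.Adj (l.getLastD u') (l.headD u') := by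
    have h1 : l.getLastD u' = y' := by
      rw [hl, List.getLastD_cons, List.getLastD_cons, List.getLastD_cons,
        ilv_getLastD_eq xs ys y2 (by omega), hys, List.getLastD_concat]
    rw [h1, hl, headD_cons]
    exact hu'y'.symm
  have := hasNCycle_of_list G l (by omega) hlnd hch u' hclose
  rwa [hllen] at this

lemma headD_append {l1 : List V} (l2 : List V) (d : V) (h : l1 ≠ []) :
    (l1 ++ l2).headD d = l1.headD d := by
  cases l1 with
  | nil => exact absurd rfl h
  | cons a t => rfl

lemma sidewheel {N : ℕ} (j : ℕ) (hj : 4 ≤ j) (R : SimpleGraph (Fin N))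
    (hblue : ¬ HasNWheel Rᶜ (2 * j))
    (w : Fin N) (H : Set (Fin N)) (hwH : ∀ x ∈ H, Rᶜ.Adj w x) (hwmem : w ∉ H)
    (P : Set (Fin N)) (hPH : P ⊆ H) (hPp : P.Pairwise Rᶜ.Adj)
    (UP : Set (Fin N)) (hUPblue : ∀ u ∈ UP, ∀ x ∈ P, Rᶜ.Adj u x)
    (hUPout : ∀ u ∈ UP, u ∉ H ∧ u ≠ w)
    (hjp : j + 1 ≤ P.ncard) (hple : P.ncard ≤ 2 * j - 1)
    (hUP : 2 * j - P.ncard ≤ UP.ncard) : False := by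
  have hPne : P.Nonempty := by
    rw [← Set.ncard_pos (Set.toFinite P)]; omega
  obtain ⟨p0, hp0⟩ := hPne
  set S : Set (Fin N) := P \ {p0} with hS
  have hScard : S.ncard + 1 = P.ncard :=
    Set.ncard_diff_singleton_add_one hp0 (Set.toFinite P)
  obtain ⟨us, husnd, huslen, husmem⟩ := exists_sublist UP (Set.toFinite UP)
    (2 * j - P.ncard) hUP
  set is : List (Fin N) := us ++ [w] with his
  have hislen : is.length = 2 * j - P.ncard + 1 := by rw [his]; simp [huslen]
  apply hblue
  have hwheel := wheel_interleave Rᶜ p0 S (Set.toFinite S) is (P.ncard - 1)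
    (hPp.mono Set.diff_subset)
    (fun x hx => hPp hp0 (Set.diff_subset hx) (fun h => hx.2 h.symm))
    (fun i hi c hc => by
      rcases List.mem_append.1 hi with h | h
      · exact hUPblue i (husmem i h) c (Set.diff_subset hc)
      · rw [List.mem_singleton] at h
        exact h ▸ hwH c (hPH (Set.diff_subset hc)))
    (fun i hi => by
      rcases List.mem_append.1 hi with h | h
      · exact (hUPblue i (husmem i h) p0 hp0).symm
      · rw [List.mem_singleton] at h
        exact h ▸ (hwH p0 (hPH hp0)).symm)
    (by
      rw [his, List.nodup_append]
      exact ⟨husnd, by simp, fun x hx y hy hxy => by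
        rw [List.mem_singleton] at hy
        exact (hUPout x (husmem x hx)).2 (hxy.trans hy)⟩)
    (fun i hi hiS => by
      rcases List.mem_append.1 hi with h | h
      · exact (hUPout i (husmem i h)).1 (hPH (Set.diff_subset hiS))
      · rw [List.mem_singleton] at h
        exact hwmem (h ▸ hPH (Set.diff_subset hiS)))
    (by rw [hislen]; omega) (by omega) (by rw [hislen]; omega)
  have : P.ncard - 1 + is.length = 2 * j := by rw [hislen]; omega
  rwa [this] at hwheel

lemma blue_of_ne_not_red {N : ℕ} {R : SimpleGraph (Fin N)} {a b : Fin N}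
    (h1 : a ≠ b) (h2 : ¬ R.Adj a b) : Rᶜ.Adj a b := by
  rw [SimpleGraph.compl_adj]; exact ⟨h1, h2⟩

lemma red_of_ne_not_blue {N : ℕ} {R : SimpleGraph (Fin N)} {a b : Fin N}
    (h1 : a ≠ b) (h2 : ¬ Rᶜ.Adj a b) : R.Adj a b := by
  rw [SimpleGraph.compl_adj] at h2
  push_neg at h2
  exact h2 h1

lemma tight {N : ℕ} (k j : ℕ) (hk : 2 < k) (hkj : k < j) (hN : 4*j+1 ≤ N)
    (R : SimpleGraph (Fin N))
    (hred : ¬ HasNCycle R (2*k+1)) (hblue : ¬ HasNWheel Rᶜ (2*j))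
    (w : Fin N) (H : Set (Fin N)) (hwH : ∀ x ∈ H, Rᶜ.Adj w x) (hwmem : w ∉ H)
    (P Q : Set (Fin N)) (hPH : P ⊆ H) (hQH : Q ⊆ H)
    (hPQ : ∀ x ∈ P, x ∉ Q)
    (hPp : P.Pairwise Rᶜ.Adj) (hQp : Q.Pairwise Rᶜ.Adj)
    (hcross : ∀ x ∈ P, ∀ y ∈ Q, R.Adj x y)
    (hpj : P.ncard = j) (hqj : Q.ncard = 2*j-1)
    (hHcard : H.ncard ≤ P.ncard + Q.ncard + 1)
    (hUQ : ∀ u : Fin N, u ∉ H → u ≠ w → ∃ y ∈ Q, R.Adj u y) : False := by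
  have hj4 : 4 ≤ j := by omega
  set U : Set (Fin N) := {u : Fin N | u ∉ H ∧ u ≠ w} with hUdef
  have hUmem : ∀ u, u ∈ U ↔ u ∉ H ∧ u ≠ w := fun u => Iff.rfl
  have hUcard : j ≤ U.ncard := by
    have hUc : U = (insert w H)ᶜ := by
      ext u
      simp only [hUdef, Set.mem_setOf_eq, Set.mem_compl_iff, Set.mem_insert_iff]
      tauto
    have h1 := Set.ncard_add_ncard_compl (insert w H) (Set.toFinite _) (Set.toFinite _)
    rw [Set.ncard_insert_of_notMem hwmem (Set.toFinite H)] at h1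
    rw [Nat.card_eq_fintype_card, Fintype.card_fin] at h1
    rw [hUc]
    omega
  have hUP : ∀ u ∈ U, ∀ x ∈ P, Rᶜ.Adj u x := by
    intro u hu x hx
    by_contra hnb
    obtain ⟨y, hyQ, hredy⟩ := hUQ u hu.1 hu.2
    have hredx : R.Adj u x := red_of_ne_not_blue (fun h => hu.1 (h ▸ hPH hx)) hnb
    exact hred (red_claim R P Q (Set.toFinite P) (Set.toFinite Q) hPQ hcross u x y
      (fun h => hu.1 (hPH h)) (fun h => hu.1 (hQH h)) hx hyQ hredx hredy k (by omega)
      (by omega) (by omega))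
  by_cases hpair : ∃ u ∈ U, ∃ u' ∈ U, R.Adj u' u
  · obtain ⟨u, hu, u', hu', hadj⟩ := hpair
    obtain ⟨y, hyQ, hredy⟩ := hUQ u hu.1 hu.2
    obtain ⟨y', hy'Q, hredy'⟩ := hUQ u' hu'.1 hu'.2
    have huP : u ∉ P := fun h => hu.1 (hPH h)
    have huQ : u ∉ Q := fun h => hu.1 (hQH h)
    have hu'P : u' ∉ P := fun h => hu'.1 (hPH h)
    have hu'Q : u' ∉ Q := fun h => hu'.1 (hQH h)
    by_cases hy2 : ∃ y2 ∈ Q, R.Adj u y2 ∧ y2 ≠ y'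
    · obtain ⟨y2, hy2Q, hr2, hne2⟩ := hy2
      exact hred (red_3a R P Q (Set.toFinite P) (Set.toFinite Q) hPQ hcross u u' y2 y'
        hadj hr2 hredy' hy2Q hy'Q hne2 huP huQ hu'P hu'Q k (by omega) (by omega) (by omega))
    · push_neg at hy2
      have hyy' : y = y' := hy2 y hyQ hredy
      by_cases hy3 : ∃ y3 ∈ Q, R.Adj u' y3 ∧ y3 ≠ y
      · obtain ⟨y3, hy3Q, hr3, hne3⟩ := hy3
        exact hred (red_3a R P Q (Set.toFinite P) (Set.toFinite Q) hPQ hcross u' u y3 y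
          hadj.symm hr3 hredy hy3Q hyQ hne3 hu'P hu'Q huP huQ k (by omega) (by omega)
          (by omega))
      · push_neg at hy3
        have hublue : ∀ z ∈ Q, z ≠ y' → Rᶜ.Adj u z := by
          intro z hz hnz
          exact blue_of_ne_not_red (fun h => hu.1 (h ▸ hQH hz))
            (fun hr => hnz (hy2 z hz hr))
        have hu'blue : ∀ z ∈ Q, z ≠ y' → Rᶜ.Adj u' z := by
          intro z hz hnz
          refine blue_of_ne_not_red (fun h => hu'.1 (h ▸ hQH hz))
            (fun hr => hnz (hyy' ▸ hy3 z hz hr))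
        have hQ'card : (Q \ {y'}).ncard + 1 = Q.ncard :=
          Set.ncard_diff_singleton_add_one hy'Q (Set.toFinite Q)
        have hQ'ne : (Q \ {y'}).Nonempty := by
          rw [← Set.ncard_pos (Set.toFinite _)]; omega
        obtain ⟨q0, hq0⟩ := hQ'ne
        set S : Set (Fin N) := (Q \ {y'}) \ {q0} with hSdef
        have hScard : S.ncard + 1 = (Q \ {y'}).ncard :=
          Set.ncard_diff_singleton_add_one hq0 (Set.toFinite _)
        have hSQ : S ⊆ Q := fun x hx => (Set.diff_subset (Set.diff_subset hx) : _)
        have hSy' : ∀ x ∈ S, x ≠ y' := fun x hx => (Set.diff_subset hx).2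
        have hSq0 : ∀ x ∈ S, x ≠ q0 := fun x hx => hx.2
        have hwheel := wheel_interleave Rᶜ q0 S (Set.toFinite S) [u, u', w] (2*j-3)
          (hQp.mono hSQ)
          (fun x hx => hQp hq0.1 (hSQ hx) (fun h => hSq0 x hx h.symm))
          (fun i hi c hc => by
            rcases List.mem_cons.1 hi with h | h
            · exact h ▸ hublue c (hSQ hc) (hSy' c hc)
            rcases List.mem_cons.1 h with h | h
            · exact h ▸ hu'blue c (hSQ hc) (hSy' c hc)
            · rw [List.mem_singleton] at h
              exact h ▸ hwH c (hQH (hSQ hc)))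
          (fun i hi => by
            rcases List.mem_cons.1 hi with h | h
            · exact h ▸ (hublue q0 hq0.1 (fun he => hq0.2 (by simp [he]))).symm
            rcases List.mem_cons.1 h with h | h
            · exact h ▸ (hu'blue q0 hq0.1 (fun he => hq0.2 (by simp [he]))).symm
            · rw [List.mem_singleton] at h
              exact h ▸ (hwH q0 (hQH hq0.1)).symm)
          (by
            refine List.nodup_cons.2 ⟨?_, List.nodup_cons.2 ⟨?_, by simp⟩⟩
            · intro h
              rcases List.mem_cons.1 h with h | h
              · exact (R.ne_of_adj hadj) h.symm
              · rw [List.mem_singleton] at h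
                exact hu.2 h
            · intro h
              rw [List.mem_singleton] at h
              exact hu'.2 h)
          (fun i hi hiS => by
            rcases List.mem_cons.1 hi with h | h
            · exact hu.1 (h ▸ hQH (hSQ hiS))
            rcases List.mem_cons.1 h with h | h
            · exact hu'.1 (h ▸ hQH (hSQ hiS))
            · rw [List.mem_singleton] at h
              exact hwmem (h ▸ hQH (hSQ hiS)))
          (by simp only [List.length_cons, List.length_nil]; omega) (by omega)
          (by simp only [List.length_cons, List.length_nil]; omega)
        have hlen3 : 2*j-3 + ([u, u', w] : List (Fin N)).length = 2*j := by
          simp only [List.length_cons, List.length_nil]; omega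
        rw [hlen3] at hwheel
        exact hblue hwheel
  · push_neg at hpair
    have hUblue : U.Pairwise Rᶜ.Adj :=
      fun a ha b hb hne => blue_of_ne_not_red hne (hpair b hb a ha)
    obtain ⟨us, husnd, huslen, husmem⟩ := exists_sublist U (Set.toFinite U) j hUcard
    have hPne : P.Nonempty := by rw [← Set.ncard_pos (Set.toFinite P)]; omega
    obtain ⟨p0, hp0⟩ := hPne
    have hP'card : (P \ {p0}).ncard + 1 = P.ncard :=
      Set.ncard_diff_singleton_add_one hp0 (Set.toFinite P)
    obtain ⟨xs, hxsnd, hxslen, hxsmem⟩ := exists_sublist (P \ {p0}) (Set.toFinite _)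
      (j-1) (by omega)
    cases xs with
    | nil => rw [List.length_nil] at hxslen; omega
    | cons xa xs2 =>
    have hxa : xa ∈ P \ {p0} := hxsmem xa (by simp)
    have hxs2mem : ∀ x ∈ xs2, x ∈ P \ {p0} := fun x hx => hxsmem x (by simp [hx])
    have hxs2len : xs2.length = j - 2 := by
      rw [List.length_cons] at hxslen; omega
    have hxs2ne : xs2 ≠ [] := by
      intro h; rw [h] at hxs2len; simp at hxs2len; omega
    have husne : us ≠ [] := by
      intro h; rw [h] at huslen; simp at huslen; omega
    rw [List.nodup_cons] at hxsnd
    set l : List (Fin N) := w :: xa :: (us ++ xs2) with hldef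
    have hllen : l.length = 2*j := by
      rw [hldef]; simp [huslen, hxs2len]; omega
    have husxs2 : (us ++ xs2).Chain' Rᶜ.Adj := by
      refine chain'_glue husne hxs2ne ?_ ?_ w ?_
      · exact chain'_of_forall_mem husnd husmem hUblue
      · exact chain'_of_forall_mem hxsnd.2 hxs2mem (hPp.mono Set.diff_subset)
      · have h1 : us.getLastD w ∈ U := husmem _ (getLastD_mem w husne)
        have h2 : xs2.headD w ∈ P := (hxs2mem _ (headD_mem w hxs2ne)).1
        exact hUP _ h1 _ h2
    have hch : l.Chain' Rᶜ.Adj := by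
      rw [hldef]
      rw [show w :: xa :: (us ++ xs2) = [w, xa] ++ (us ++ xs2) from rfl]
      refine chain'_glue (by simp) (by simp [husne]) ?_ husxs2 w ?_
      · show List.IsChain _ _
        rw [List.isChain_pair]
        exact hwH xa (hPH hxa.1)
      · rw [show ([w, xa] : List (Fin N)).getLastD w = xa from rfl,
          headD_append xs2 w husne]
        have h2 : us.headD w ∈ U := husmem _ (headD_mem w husne)
        exact (hUP _ h2 _ hxa.1).symm
    have hlnd : l.Nodup := by
      rw [hldef, List.nodup_cons, List.nodup_cons, List.nodup_append]
      refine ⟨?_, ?_, husnd, hxsnd.2, ?_⟩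
      · intro h
        rcases List.mem_cons.1 h with h | h
        · exact hwmem (h ▸ hPH hxa.1)
        rcases List.mem_append.1 h with h | h
        · exact (husmem _ h).2 rfl
        · exact hwmem (hPH (hxs2mem _ h).1)
      · intro h
        rcases List.mem_append.1 h with h | h
        · exact (husmem _ h).1 (hPH hxa.1)
        · exact hxsnd.1 h
      · intro x hx y hy hxy
        exact (husmem _ hx).1 (hPH (hxs2mem _ (hxy ▸ hy)).1)
    have hclose : Rᶜ.Adj (l.getLastD w) (l.headD w) := by
      have h1 : l.getLastD w = xs2.getLastD w := by
        rw [hldef, List.getLastD_cons, List.getLastD_cons,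
          getLastD_append us xs2 xa hxs2ne]
        exact getLastD_congr _ _ hxs2ne
      rw [h1, hldef, headD_cons]
      exact (hwH _ (hPH (hxs2mem _ (getLastD_mem w hxs2ne)).1)).symm
    have hhub : ∀ x ∈ l, Rᶜ.Adj p0 x := by
      intro x hx
      rcases List.mem_cons.1 hx with h | h
      · exact h ▸ (hwH p0 (hPH hp0)).symm
      rcases List.mem_cons.1 h with h | h
      · exact h ▸ hPp hp0 hxa.1 (fun he => hxa.2 he.symm)
      rcases List.mem_append.1 h with h | h
      · exact (hUP _ (husmem _ h) _ hp0).symm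
      · exact hPp hp0 (hxs2mem _ h).1 (fun he => (hxs2mem _ h).2 he.symm)
    have hwheel := hasNWheel_of_list Rᶜ p0 l (by omega) hlnd hch w hclose hhub
    rw [hllen] at hwheel
    exact hblue hwheel

lemma starcase {N : ℕ} (k j : ℕ) (hk : 2 < k) (hkj : k < j) (hN : 4*j+1 ≤ N)
    (R : SimpleGraph (Fin N))
    (hred : ¬ HasNCycle R (2*k+1)) (hblue : ¬ HasNWheel Rᶜ (2*j))
    (w : Fin N) (H : Set (Fin N)) (hwH : ∀ x ∈ H, Rᶜ.Adj w x) (hwmem : w ∉ H)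
    (P Q : Set (Fin N)) (hPH : P ⊆ H) (hQH : Q ⊆ H)
    (hPQ : ∀ x ∈ P, x ∉ Q)
    (hPp : P.Pairwise Rᶜ.Adj) (hQp : Q.Pairwise Rᶜ.Adj)
    (hcross : ∀ x ∈ P, ∀ y ∈ Q, R.Adj x y)
    (hPlo : j ≤ P.ncard) (hQlo : j ≤ Q.ncard)
    (hPhi : P.ncard ≤ 2*j-1) (hQhi : Q.ncard ≤ 2*j-1)
    (hsum : 3*j-1 ≤ P.ncard + Q.ncard)
    (hHcard : H.ncard ≤ P.ncard + Q.ncard + 1) : False := by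
  have hj4 : 4 ≤ j := by omega
  set U : Set (Fin N) := {u : Fin N | u ∉ H ∧ u ≠ w} with hUdef
  have hUcard : U.ncard + (H.ncard + 1) = N := by
    have hUc : U = (insert w H)ᶜ := by
      ext u
      simp only [hUdef, Set.mem_setOf_eq, Set.mem_compl_iff, Set.mem_insert_iff]
      tauto
    have h1 := Set.ncard_add_ncard_compl (insert w H) (Set.toFinite _) (Set.toFinite _)
    rw [Set.ncard_insert_of_notMem hwmem (Set.toFinite H)] at h1
    rw [Nat.card_eq_fintype_card, Fintype.card_fin] at h1
    rw [hUc]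
    omega
  set UP : Set (Fin N) := {u : Fin N | u ∈ U ∧ ∀ x ∈ P, Rᶜ.Adj u x} with hUPdef
  set UQ : Set (Fin N) := {u : Fin N | u ∈ U ∧ ∀ y ∈ Q, Rᶜ.Adj u y} with hUQdef
  have claim : ∀ u ∈ U, u ∈ UP ∨ u ∈ UQ := by
    intro u hu
    by_contra hc
    rcases not_or.1 hc with ⟨h1, h2⟩
    have hx : ∃ x ∈ P, ¬Rᶜ.Adj u x := by
      by_contra h; push_neg at h; exact h1 ⟨hu, h⟩
    have hy : ∃ y ∈ Q, ¬Rᶜ.Adj u y := by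
      by_contra h; push_neg at h; exact h2 ⟨hu, h⟩
    obtain ⟨x, hxP, hnx⟩ := hx
    obtain ⟨y, hyQ, hny⟩ := hy
    exact hred (red_claim R P Q (Set.toFinite P) (Set.toFinite Q) hPQ hcross u x y
      (fun h => hu.1 (hPH h)) (fun h => hu.1 (hQH h)) hxP hyQ
      (red_of_ne_not_blue (fun h => hu.1 (h ▸ hPH hxP)) hnx)
      (red_of_ne_not_blue (fun h => hu.1 (h ▸ hQH hyQ)) hny)
      k (by omega) (by omega) (by omega))
  by_cases hC1 : j+1 ≤ P.ncard ∧ 2*j - P.ncard ≤ UP.ncard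
  · exact sidewheel j hj4 R hblue w H hwH hwmem P hPH hPp UP
      (fun u hu => hu.2) (fun u hu => hu.1) hC1.1 hPhi hC1.2
  by_cases hC2 : j+1 ≤ Q.ncard ∧ 2*j - Q.ncard ≤ UQ.ncard
  · exact sidewheel j hj4 R hblue w H hwH hwmem Q hQH hQp UQ
      (fun u hu => hu.2) (fun u hu => hu.1) hC2.1 hQhi hC2.2
  have hUle : U.ncard ≤ UP.ncard + UQ.ncard := by
    calc U.ncard ≤ (UP ∪ UQ).ncard := Set.ncard_le_ncard
          (fun u hu => (claim u hu).elim (fun h => Or.inl h) (fun h => Or.inr h))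
          (Set.toFinite _)
      _ ≤ UP.ncard + UQ.ncard := Set.ncard_union_le _ _
  by_cases hpj : P.ncard = j
  · have hqcard : Q.ncard = 2*j-1 := by omega
    have hUQ0 : UQ.ncard = 0 := by
      have hq1 : j+1 ≤ Q.ncard := by omega
      have h2 : ¬(2*j - Q.ncard ≤ UQ.ncard) := fun h => hC2 ⟨hq1, h⟩
      omega
    have hUQempty : UQ = ∅ := (Set.ncard_eq_zero (Set.toFinite _)).1 hUQ0
    apply tight k j hk hkj hN R hred hblue w H hwH hwmem P Q hPH hQH hPQ hPp hQp
      hcross hpj hqcard hHcard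
    intro u huH huw
    have hu : u ∈ U := ⟨huH, huw⟩
    have hnotUQ : u ∉ UQ := by rw [hUQempty]; exact Set.notMem_empty u
    have hex : ∃ y ∈ Q, ¬Rᶜ.Adj u y := by
      by_contra h; push_neg at h; exact hnotUQ ⟨hu, h⟩
    obtain ⟨y, hy, hny⟩ := hex
    exact ⟨y, hy, red_of_ne_not_blue (fun h => huH (h ▸ hQH hy)) hny⟩
  by_cases hqj : Q.ncard = j
  · have hpcard : P.ncard = 2*j-1 := by omega
    have hUP0 : UP.ncard = 0 := by
      have hp1 : j+1 ≤ P.ncard := by omega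
      have h2 : ¬(2*j - P.ncard ≤ UP.ncard) := fun h => hC1 ⟨hp1, h⟩
      omega
    have hUPempty : UP = ∅ := (Set.ncard_eq_zero (Set.toFinite _)).1 hUP0
    apply tight k j hk hkj hN R hred hblue w H hwH hwmem Q P hQH hPH
      (fun y hy hyP => hPQ y hyP hy) hQp hPp
      (fun y hy x hx => (hcross x hx y hy).symm) hqj hpcard (by omega)
    intro u huH huw
    have hu : u ∈ U := ⟨huH, huw⟩
    have hnotUP : u ∉ UP := by rw [hUPempty]; exact Set.notMem_empty u
    have hex : ∃ x ∈ P, ¬Rᶜ.Adj u x := by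
      by_contra h; push_neg at h; exact hnotUP ⟨hu, h⟩
    obtain ⟨x, hx, hnx⟩ := hex
    exact ⟨x, hx, red_of_ne_not_blue (fun h => huH (h ▸ hPH hx)) hnx⟩
  have hp1 : j+1 ≤ P.ncard := by omega
  have hq1 : j+1 ≤ Q.ncard := by omega
  have hUPlt : ¬(2*j - P.ncard ≤ UP.ncard) := fun h => hC1 ⟨hp1, h⟩
  have hUQlt : ¬(2*j - Q.ncard ≤ UQ.ncard) := fun h => hC2 ⟨hq1, h⟩
  omega

lemma ncard_le_diff_singleton {S : Set V} (hS : S.Finite) (v : V) :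
    S.ncard ≤ (S \ {v}).ncard + 1 := by
  by_cases hv : v ∈ S
  · rw [Set.ncard_diff_singleton_add_one hv hS]
  · rw [Set.diff_singleton_eq_self hv]
    omega

lemma clique_cap {N : ℕ} (j : ℕ) (hj : 2 ≤ j) (R : SimpleGraph (Fin N))
    (hblue : ¬ HasNWheel Rᶜ (2*j))
    (w : Fin N) (H : Set (Fin N)) (hwH : ∀ x ∈ H, Rᶜ.Adj w x)
    (S : Set (Fin N)) (hSH : S ⊆ H) (hSp : S.Pairwise Rᶜ.Adj) :
    S.ncard ≤ 2*j - 1 := by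
  by_contra hcon
  push_neg at hcon
  have h2j : 2*j ≤ S.ncard := by omega
  have hwheel := wheel_interleave Rᶜ w S (Set.toFinite S) [] (2*j) hSp
    (fun x hx => hwH x (hSH hx)) (by simp) (by simp) List.nodup_nil (by simp)
    (by simp) h2j (by simp; omega)
  rw [show 2*j + ([] : List (Fin N)).length = 2*j by simp] at hwheel
  exact hblue hwheel

lemma two_indep {N : ℕ} (j : ℕ) (hj : 2 ≤ j) (R : SimpleGraph (Fin N))
    (hblue : ¬ HasNWheel Rᶜ (2*j))
    (w : Fin N) (H : Set (Fin N)) (hwH : ∀ x ∈ H, Rᶜ.Adj w x)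
    (X Y : Set (Fin N)) (hXH : X ⊆ H) (hYH : Y ⊆ H)
    (hXY : ∀ x ∈ X, x ∉ Y)
    (hXp : X.Pairwise Rᶜ.Adj) (hYp : Y.Pairwise Rᶜ.Adj)
    (hXlo : 2 ≤ X.ncard) (hYlo : 2 ≤ Y.ncard)
    (hXhi : X.ncard ≤ 2*j-1) (hYhi : Y.ncard ≤ 2*j-1)
    (hsum : 2*j ≤ X.ncard + Y.ncard)
    (x1 x2 y1 y2 : Fin N) (hx1 : x1 ∈ X) (hx2 : x2 ∈ X) (hy1 : y1 ∈ Y) (hy2 : y2 ∈ Y)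
    (hxne : x1 ≠ x2) (hyne : y1 ≠ y2)
    (hb1 : Rᶜ.Adj x1 y1) (hb2 : Rᶜ.Adj x2 y2) : False := by
  set tX := min X.ncard (2*j-2) with htX
  have hx12 : ({x1, x2} : Set (Fin N)) ⊆ X := by
    intro z hz; rcases hz with h | h
    · exact h ▸ hx1
    · exact h ▸ hx2
  have hy12 : ({y1, y2} : Set (Fin N)) ⊆ Y := by
    intro z hz; rcases hz with h | h
    · exact h ▸ hy1
    · exact h ▸ hy2
  have hXdc : (X \ {x1, x2}).ncard = X.ncard - 2 := by
    rw [Set.ncard_diff hx12 ((Set.finite_singleton _).insert _), Set.ncard_pair hxne]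
  have hYdc : (Y \ {y1, y2}).ncard = Y.ncard - 2 := by
    rw [Set.ncard_diff hy12 ((Set.finite_singleton _).insert _), Set.ncard_pair hyne]
  obtain ⟨mx, hmxnd, hmxlen, hmxmem⟩ := exists_sublist (X \ {x1, x2}) (Set.toFinite _)
    (tX - 2) (by omega)
  obtain ⟨my, hmynd, hmylen, hmymem⟩ := exists_sublist (Y \ {y1, y2}) (Set.toFinite _)
    (2*j - tX - 2) (by omega)
  set xs : List (Fin N) := x1 :: (mx ++ [x2]) with hxs
  set ys : List (Fin N) := y2 :: (my ++ [y1]) with hys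
  have hxsmem : ∀ x ∈ xs, x ∈ X := by
    intro x hx
    rcases List.mem_cons.1 hx with h | h
    · exact h ▸ hx1
    rcases List.mem_append.1 h with h | h
    · exact (hmxmem x h).1
    · rw [List.mem_singleton] at h; exact h ▸ hx2
  have hysmem : ∀ y ∈ ys, y ∈ Y := by
    intro y hy
    rcases List.mem_cons.1 hy with h | h
    · exact h ▸ hy2
    rcases List.mem_append.1 h with h | h
    · exact (hmymem y h).1
    · rw [List.mem_singleton] at h; exact h ▸ hy1
  have hxsnd : xs.Nodup := by
    rw [hxs, List.nodup_cons, List.nodup_append]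
    refine ⟨?_, hmxnd, by simp, ?_⟩
    · intro h
      rcases List.mem_append.1 h with h | h
      · exact (hmxmem x1 h).2 (by simp)
      · rw [List.mem_singleton] at h; exact hxne h
    · intro z hz z' hz2 hzz
      rw [List.mem_singleton] at hz2
      exact (hmxmem z hz).2 (by simp [hzz, hz2])
  have hysnd : ys.Nodup := by
    rw [hys, List.nodup_cons, List.nodup_append]
    refine ⟨?_, hmynd, by simp, ?_⟩
    · intro h
      rcases List.mem_append.1 h with h | h
      · exact (hmymem y2 h).2 (by simp)
      · rw [List.mem_singleton] at h; exact hyne h.symm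
    · intro z hz z' hz2 hzz
      rw [List.mem_singleton] at hz2
      exact (hmymem z hz).2 (by simp [hzz, hz2])
  have hxslen : xs.length = tX := by rw [hxs]; simp [hmxlen]; omega
  have hyslen : ys.length = 2*j - tX := by rw [hys]; simp [hmylen]; omega
  set l : List (Fin N) := xs ++ ys with hl
  have hllen : l.length = 2*j := by rw [hl]; simp [hxslen, hyslen]; omega
  have hxsne : xs ≠ [] := by rw [hxs]; simp
  have hysne : ys ≠ [] := by rw [hys]; simp
  have hch : l.Chain' Rᶜ.Adj := by
    refine chain'_glue hxsne hysne ?_ ?_ w ?_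
    · exact chain'_of_forall_mem hxsnd hxsmem hXp
    · exact chain'_of_forall_mem hysnd hysmem hYp
    · rw [show xs.getLastD w = x2 by rw [hxs, List.getLastD_cons, List.getLastD_concat],
        show ys.headD w = y2 from rfl]
      exact hb2
  have hlnd : l.Nodup := by
    rw [hl, List.nodup_append]
    exact ⟨hxsnd, hysnd, fun z hz z' hz2 hzz => hXY z (hxsmem z hz) (hysmem z (hzz ▸ hz2))⟩
  have hclose : Rᶜ.Adj (l.getLastD w) (l.headD w) := by
    rw [show l.getLastD w = y1 by
        rw [hl, getLastD_append xs ys w hysne, hys, List.getLastD_cons,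
          List.getLastD_concat],
      show l.headD w = x1 by rw [hl, headD_append ys w hxsne]; rfl]
    exact hb1.symm
  have hhub : ∀ x ∈ l, Rᶜ.Adj w x := by
    intro x hx
    rcases List.mem_append.1 hx with h | h
    · exact hwH x (hXH (hxsmem x h))
    · exact hwH x (hYH (hysmem x h))
  have hwheel := hasNWheel_of_list Rᶜ w l (by omega) hlnd hch w hclose hhub
  rw [hllen] at hwheel
  exact hblue hwheel

end Aux


open Aux in
theorem stmt16 (k j N : ℕ) (hk : 2 < k) (hkj : k < j) (hN : 4 * j + 1 ≤ N)
    (R : SimpleGraph (Fin N))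
    (hred : ¬ HasNCycle R (2 * k + 1))
    (hblue : ¬ HasNWheel Rᶜ (2 * j))
    (w : Fin N) (H : Set (Fin N)) (hH : H = Rᶜ.neighborSet w)
    (hcard : 3 * j ≤ H.ncard) :
    ¬ IsBipartite (R.induce H) := by
  intro hbip
  obtain ⟨A, hA⟩ := hbip
  have hwH : ∀ x ∈ H, Rᶜ.Adj w x := by
    intro x hx; rw [hH] at hx; exact hx
  have hwmem : w ∉ H := by
    rw [hH]
    intro h
    exact Rᶜ.irrefl h
  set X : Set (Fin N) := {x : Fin N | ∃ hx : x ∈ H, (⟨x, hx⟩ : ↥H) ∈ A} with hXdef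
  set Y : Set (Fin N) := H \ X with hYdef
  have hXH : X ⊆ H := fun x hx => hx.choose
  have hYH : Y ⊆ H := fun y hy => hy.1
  have hXY : ∀ x ∈ X, x ∉ Y := fun x hx hy => hy.2 hx
  have hAiff : ∀ (a b : Fin N) (ha : a ∈ H) (hb : b ∈ H), R.Adj a b →
      ((⟨a, ha⟩ : ↥H) ∈ A ↔ (⟨b, hb⟩ : ↥H) ∉ A) := by
    intro a b ha hb hr
    exact hA ⟨a, ha⟩ ⟨b, hb⟩ (by simpa using hr)
  have hXp : X.Pairwise Rᶜ.Adj := by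
    intro a ha b hb hne
    refine blue_of_ne_not_red hne (fun hr => ?_)
    obtain ⟨haH, haA⟩ := ha
    obtain ⟨hbH, hbA⟩ := hb
    exact ((hAiff a b haH hbH hr).1 haA) hbA
  have hYp : Y.Pairwise Rᶜ.Adj := by
    intro a ha b hb hne
    refine blue_of_ne_not_red hne (fun hr => ?_)
    have haA : (⟨a, ha.1⟩ : ↥H) ∉ A := fun hm => ha.2 ⟨ha.1, hm⟩
    have hbA : (⟨b, hb.1⟩ : ↥H) ∉ A := fun hm => hb.2 ⟨hb.1, hm⟩
    exact haA ((hAiff a b ha.1 hb.1 hr).2 hbA)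
  have hXYcard : X.ncard + Y.ncard = H.ncard := by
    have h1 : (H \ X).ncard = H.ncard - X.ncard := Set.ncard_diff hXH (Set.toFinite X)
    have h2 : X.ncard ≤ H.ncard := Set.ncard_le_ncard hXH (Set.toFinite H)
    rw [hYdef]
    omega
  have capX : X.ncard ≤ 2*j-1 := clique_cap j (by omega) R hblue w H hwH X hXH hXp
  have capY : Y.ncard ≤ 2*j-1 := clique_cap j (by omega) R hblue w H hwH Y hYH hYp
  have hXlo : j+1 ≤ X.ncard := by omega
  have hYlo : j+1 ≤ Y.ncard := by omega
  by_cases h2i : ∃ x1 ∈ X, ∃ x2 ∈ X, ∃ y1 ∈ Y, ∃ y2 ∈ Y,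
      x1 ≠ x2 ∧ y1 ≠ y2 ∧ Rᶜ.Adj x1 y1 ∧ Rᶜ.Adj x2 y2
  · obtain ⟨x1, hx1, x2, hx2, y1, hy1, y2, hy2, hxne, hyne, hb1, hb2⟩ := h2i
    exact two_indep j (by omega) R hblue w H hwH X Y hXH hYH hXY hXp hYp
      (by omega) (by omega) capX capY (by omega)
      x1 x2 y1 y2 hx1 hx2 hy1 hy2 hxne hyne hb1 hb2
  · have hstar : ∃ v : Fin N, ∀ x ∈ X, ∀ y ∈ Y, x ≠ v → y ≠ v → R.Adj x y := by
      by_cases hb : ∃ x ∈ X, ∃ y ∈ Y, Rᶜ.Adj x y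
      · obtain ⟨x0, hx0, y0, hy0, hb0⟩ := hb
        by_cases hall : ∀ x ∈ X, ∀ y ∈ Y, Rᶜ.Adj x y → x = x0
        · refine ⟨x0, fun x hx y hy hxv _ => ?_⟩
          exact red_of_ne_not_blue (fun h => hXY x hx (h ▸ hy))
            (fun hbl => hxv (hall x hx y hy hbl))
        · push_neg at hall
          obtain ⟨x1, hx1, y1, hy1, hb1, hne1⟩ := hall
          have hyy : y1 = y0 := by
            by_contra hne
            exact h2i ⟨x0, hx0, x1, hx1, y0, hy0, y1, hy1, fun h => hne1 h.symm,
              fun h => hne h.symm, hb0, hb1⟩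
          have hb1' : Rᶜ.Adj x1 y0 := hyy ▸ hb1
          refine ⟨y0, fun x hx y hy _ hyv => ?_⟩
          refine red_of_ne_not_blue (fun h => hXY x hx (h ▸ hy)) (fun hbl => ?_)
          by_cases hxx0 : x = x0
          · exact h2i ⟨x1, hx1, x, hx, y0, hy0, y, hy,
              fun h => hne1 (h.trans hxx0), fun h => hyv h.symm, hb1', hbl⟩
          · exact h2i ⟨x0, hx0, x, hx, y0, hy0, y, hy,
              fun h => hxx0 h.symm, fun h => hyv h.symm, hb0, hbl⟩
      · push_neg at hb
        exact ⟨w, fun x hx y hy _ _ =>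
          red_of_ne_not_blue (fun h => hXY x hx (h ▸ hy)) (hb x hx y hy)⟩
    obtain ⟨v, hv⟩ := hstar
    set P : Set (Fin N) := X \ {v} with hPdef
    set Q : Set (Fin N) := Y \ {v} with hQdef
    have hsum' : X.ncard + Y.ncard ≤ P.ncard + Q.ncard + 1 := by
      by_cases hvX : v ∈ X
      · have hvY : v ∉ Y := hXY v hvX
        have hQY : Q = Y := by rw [hQdef]; exact Set.diff_singleton_eq_self hvY
        have h1 : P.ncard + 1 = X.ncard :=
          Set.ncard_diff_singleton_add_one hvX (Set.toFinite X)
        rw [hQY]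
        omega
      · have hPX : P = X := by rw [hPdef]; exact Set.diff_singleton_eq_self hvX
        have h1 : Y.ncard ≤ Q.ncard + 1 := ncard_le_diff_singleton (Set.toFinite Y) v
        rw [hPX]
        omega
    have hPlo : j ≤ P.ncard := by
      have h := ncard_le_diff_singleton (Set.toFinite X) v
      rw [← hPdef] at h
      omega
    have hQlo : j ≤ Q.ncard := by
      have h := ncard_le_diff_singleton (Set.toFinite Y) v
      rw [← hQdef] at h
      omega
    have hPhi : P.ncard ≤ 2*j-1 :=
      le_trans (Set.ncard_le_ncard Set.diff_subset (Set.toFinite X)) capX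
    have hQhi : Q.ncard ≤ 2*j-1 :=
      le_trans (Set.ncard_le_ncard Set.diff_subset (Set.toFinite Y)) capY
    refine starcase k j hk hkj hN R hred hblue w H hwH hwmem P Q
      (fun x hx => hXH hx.1) (fun y hy => hYH hy.1)
      (fun x hx hq => hXY x hx.1 hq.1)
      (hXp.mono Set.diff_subset) (hYp.mono Set.diff_subset)
      (fun x hx y hy => hv x hx.1 y hy.1
        (fun h => hx.2 (Set.mem_singleton_iff.2 h))
        (fun h => hy.2 (Set.mem_singleton_iff.2 h)))
      hPlo hQlo hPhi hQhi (by omega) (by omega)
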